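/- For all γ ∈ (0,1) and λ ∈ (0,1], the Aragón Artacho–Campoy operator can be written in terms of the Douglas–Rachford operator: T(Aγ,Bγ) = T(A,B) + (1−2λγ)·JA − JB∘RA + 2λγ·JB∘RAγ, i.e. for every x ∈ X, T(Aγ,Bγ)(x) = T(A,B)(x) + (1−2λγ)·JA(x) − JB(RA(x)) + 2λγ·JB(RAγ(x)). -/
import Mathlib

theorem aacaStmt4 {X : Type*} [NormedAddCommGroup X] [InnerProductSpace ℝ X] [CompleteSpace X]
    (JA JB : X → X) (w : X) (γ lam : ℝ)
    (hγ : γ ∈ Set.Ioo (0 : ℝ) 1) (hlam : lam ∈ Set.Ioc (0 : ℝ) 1)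
    (RA RAγ RBγ TAγBγ TAB : X → X)
    (hRA : ∀ x, RA x = (2 : ℝ) • JA x - x)
    (hRAγ : ∀ x, RAγ x = (2 * γ) • JA x + (2 * (1 - γ)) • w - x)
    (hRBγ : ∀ x, RBγ x = (2 * γ) • JB x + (2 * (1 - γ)) • w - x)
    (hT : ∀ x, TAγBγ x = (1 - lam) • x + lam • RBγ (RAγ x))
    (hTAB : ∀ x, TAB x = x - JA x + JB (RA x)) :
    ∀ x : X, TAγBγ x
      = TAB x + (1 - 2 * lam * γ) • JA x - JB (RA x) + (2 * lam * γ) • JB (RAγ x) := by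
  intro x
  rw [hT, hTAB, hRBγ, hRAγ]
  module
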